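/- The assignment f ↦ T_f induces a bijection between the orbits of GL₂(ℤ) acting on integral binary cubic forms by (f·g)(x, y) = det(g)⁻¹·f((x, y)g) and isomorphism classes of cubic rings over ℤ. That is: (i) every cubic ring over ℤ is isomorphic as a ring to T_f for some binary cubic form f with integer coefficients; and (ii) for two such forms f, f', the rings T_f and T_{f'} are isomorphic if and only if f' = f·g for some g ∈ GL₂(ℤ). -/

import Mathlib

set_option autoImplicit false

/-!
The Delone–Faddeev parametrization: `f ↦ T_f` induces a bijection between
`GL₂(ℤ)`-orbits of integral binary cubic forms, acting by
`(f·g)(x, y) = det(g)⁻¹·f((x, y)g)`, and isomorphism classes of cubic rings over `ℤ`.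
Here `T_f = ℤ ⊕ ℤω ⊕ ℤθ` for `f = (a,b,c,d)`, with multiplication table
`ωθ = θω = −ad`, `ω² = −ac + aθ − bω`, `θ² = −bd + cθ − dω`.
-/

/-- The multiplication of the cubic ring `T_f` attached to the binary cubic form
`f = (a, b, c, d)`: elements written `(x₀, x₁, x₂)` for `x₀ + x₁ω + x₂θ`, with
`ωθ = θω = −ad`, `ω² = −ac + aθ − bω`, `θ² = −bd + cθ − dω`. -/
def cubicMul (a b c d : ℤ) (x y : ℤ × ℤ × ℤ) : ℤ × ℤ × ℤ :=
  (x.1 * y.1 - a * c * (x.2.1 * y.2.1) - a * d * (x.2.1 * y.2.2 + x.2.2 * y.2.1)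
      - b * d * (x.2.2 * y.2.2),
   x.1 * y.2.1 + x.2.1 * y.1 - b * (x.2.1 * y.2.1) - d * (x.2.2 * y.2.2),
   x.1 * y.2.2 + x.2.2 * y.1 + a * (x.2.1 * y.2.1) + c * (x.2.2 * y.2.2))


section Core
variable (T : Type) [CommRing T]

lemma symm_decomp (E : T ≃+ ℤ × ℤ × ℤ) (hE1 : E 1 = (1,0,0)) (p : ℤ × ℤ × ℤ) :
    E.symm p = p.1 • (1 : T) + p.2.1 • E.symm (0,1,0) + p.2.2 • E.symm (0,0,1) := by
  have hp : p = p.1 • ((1,0,0) : ℤ × ℤ × ℤ) + p.2.1 • (0,1,0) + p.2.2 • (0,0,1) := by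
    ext <;> simp
  have h1 : E.symm (1,0,0) = 1 := by rw [← hE1, AddEquiv.symm_apply_apply]
  conv_lhs => rw [hp, map_add, map_add, map_zsmul, map_zsmul, map_zsmul, h1]

lemma decomp (E : T ≃+ ℤ × ℤ × ℤ) (hE1 : E 1 = (1,0,0)) (x : T) :
    x = (E x).1 • (1 : T) + (E x).2.1 • E.symm (0,1,0) + (E x).2.2 • E.symm (0,0,1) := by
  conv_lhs => rw [← E.symm_apply_apply x]
  exact symm_decomp T E hE1 (E x)
end Core

section Core2
variable (T : Type) [CommRing T]

lemma core (E : T ≃+ ℤ × ℤ × ℤ) (hE1 : E 1 = (1,0,0))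
    (hn1 : (E (E.symm (0,1,0) * E.symm (0,0,1))).2.1 = 0)
    (hn2 : (E (E.symm (0,1,0) * E.symm (0,0,1))).2.2 = 0) :
    ∃ a b c d : ℤ, ∀ x y : T, E (x * y) = cubicMul a b c d (E x) (E y) := by
  set ω := E.symm (0,1,0) with hω
  set θ := E.symm (0,0,1) with hθ
  have hEω : E ω = (0,1,0) := E.apply_symm_apply _
  have hEθ : E θ = (0,0,1) := E.apply_symm_apply _
  set a := (E (ω*ω)).2.2 with ha
  set b := -(E (ω*ω)).2.1 with hb
  set c := (E (θ*θ)).2.2 with hc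
  set d := -(E (θ*θ)).2.1 with hd
  set A0 := (E (ω*ω)).1 with hA0'
  set D0 := (E (θ*θ)).1 with hD0'
  set l := (E (ω*θ)).1 with hl'
  have hEωω : E (ω*ω) = (A0, -b, a) := by
    rw [hb]; ext <;> simp <;> rfl
  have hEωθ : E (ω*θ) = (l, 0, 0) := by
    ext
    · rfl
    · exact hn1
    · exact hn2
  have hEθθ : E (θ*θ) = (D0, -d, c) := by
    rw [hd]; ext <;> simp <;> rfl
  have hωω : ω*ω = A0 • (1:T) + (-b) • ω + a • θ := by
    nth_rewrite 1 [decomp T E hE1 (ω*ω)]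
    rw [hEωω]
  have hωθ : ω*θ = l • (1:T) := by
    nth_rewrite 1 [decomp T E hE1 (ω*θ)]
    rw [hEωθ]
    simp
  have hθθ : θ*θ = D0 • (1:T) + (-d) • ω + c • θ := by
    nth_rewrite 1 [decomp T E hE1 (θ*θ)]
    rw [hEθθ]
  have assoc1 : E ((ω*ω)*θ) = E (ω*(ω*θ)) := congrArg E (mul_assoc ω ω θ)
  have lhs1 : E ((ω*ω)*θ) = A0 • ((0:ℤ),(0:ℤ),(1:ℤ)) + (-b) • (l,0,0) + a • (D0,-d,c) := by
    rw [hωω, add_mul, add_mul, smul_mul_assoc, smul_mul_assoc, smul_mul_assoc, one_mul,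
      map_add, map_add, map_zsmul, map_zsmul, map_zsmul, hEθ, hEωθ, hEθθ]
  have rhs1 : E (ω*(ω*θ)) = l • ((0:ℤ),(1:ℤ),(0:ℤ)) := by
    rw [hωθ, mul_smul_comm, mul_one, map_zsmul, hEω]
  rw [lhs1, rhs1] at assoc1
  rw [Prod.ext_iff, Prod.ext_iff] at assoc1
  obtain ⟨g1, g2, g3⟩ := assoc1
  simp only [Prod.fst_add, Prod.snd_add, Prod.smul_fst, Prod.smul_snd, smul_eq_mul] at g1 g2 g3
  have assoc2 : E ((θ*θ)*ω) = E (θ*(θ*ω)) := congrArg E (mul_assoc θ θ ω)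
  have lhs2 : E ((θ*θ)*ω) = D0 • ((0:ℤ),(1:ℤ),(0:ℤ)) + (-d) • (A0,-b,a) + c • (l,0,0) := by
    rw [hθθ, add_mul, add_mul, smul_mul_assoc, smul_mul_assoc, smul_mul_assoc, one_mul,
      mul_comm θ ω, map_add, map_add, map_zsmul, map_zsmul, map_zsmul, hEω, hEωω, hEωθ]
  have rhs2 : E (θ*(θ*ω)) = l • ((0:ℤ),(0:ℤ),(1:ℤ)) := by
    rw [mul_comm θ ω, hωθ, mul_smul_comm, mul_one, map_zsmul, hEθ]
  rw [lhs2, rhs2] at assoc2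
  rw [Prod.ext_iff, Prod.ext_iff] at assoc2
  obtain ⟨k1, k2, k3⟩ := assoc2
  simp only [Prod.fst_add, Prod.snd_add, Prod.smul_fst, Prod.smul_snd, smul_eq_mul] at k1 k2 k3
  -- g2 : A0*0 + (-b)*0 + a*(-d) = l*1 ; g3 : A0 + a*c = 0 ; k2 : D0 + (-d)*(-b) = 0
  have hl : l = -(a*d) := by linarith [g2]
  have hA0 : A0 = -(a*c) := by linarith [g3]
  have hD0 : D0 = -(b*d) := by linarith [k2]
  refine ⟨a, b, c, d, fun x y => ?_⟩
  have key : x * y =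
      ((E x).1*(E y).1) • (1:T) + ((E x).1*(E y).2.1 + (E x).2.1*(E y).1) • ω
      + ((E x).1*(E y).2.2 + (E x).2.2*(E y).1) • θ
      + ((E x).2.1*(E y).2.1) • (ω*ω)
      + ((E x).2.1*(E y).2.2 + (E x).2.2*(E y).2.1) • (ω*θ)
      + ((E x).2.2*(E y).2.2) • (θ*θ) := by
    nth_rewrite 1 [decomp T E hE1 x, decomp T E hE1 y]
    simp only [zsmul_eq_mul]
    push_cast
    ring
  rw [key, map_add, map_add, map_add, map_add, map_add, map_zsmul, map_zsmul, map_zsmul,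
    map_zsmul, map_zsmul, map_zsmul, hE1, hEω, hEθ, hEωω, hEωθ, hEθθ, hl, hA0, hD0]
  rw [Prod.ext_iff, Prod.ext_iff]
  refine ⟨?_, ?_, ?_⟩ <;>
    simp only [cubicMul, Prod.fst_add, Prod.snd_add, Prod.smul_fst, Prod.smul_snd,
      smul_eq_mul] <;> ring
end Core2

section Norm
variable (T : Type) [CommRing T]

lemma normalizeE (E : T ≃+ ℤ × ℤ × ℤ) (hE1 : E 1 = (1,0,0)) :
    ∃ E' : T ≃+ ℤ × ℤ × ℤ, E' 1 = (1,0,0) ∧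
      (E' (E'.symm (0,1,0) * E'.symm (0,0,1))).2.1 = 0 ∧
      (E' (E'.symm (0,1,0) * E'.symm (0,0,1))).2.2 = 0 := by
  set ω := E.symm (0,1,0) with hω
  set θ := E.symm (0,0,1) with hθ
  set l := (E (ω*θ)).1 with hl
  set m := (E (ω*θ)).2.1 with hm
  set n := (E (ω*θ)).2.2 with hn
  have hEωθ : E (ω*θ) = (l, m, n) := by ext <;> rfl
  refine ⟨E.trans (⟨⟨fun v => (v.1 + n*v.2.1 + m*v.2.2, v.2.1, v.2.2),
      fun v => (v.1 - n*v.2.1 - m*v.2.2, v.2.1, v.2.2), ?_, ?_⟩, ?_⟩), ?_, ?_, ?_⟩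
  · intro v; ext <;> simp <;> ring
  · intro v; ext <;> simp <;> ring
  · intro u v; ext <;> simp <;> ring
  · rw [AddEquiv.trans_apply, hE1]
    ext <;> simp
  all_goals {
    have hsymm : ∀ p : ℤ × ℤ × ℤ,
        (E.trans (⟨⟨fun v => (v.1 + n*v.2.1 + m*v.2.2, v.2.1, v.2.2),
          fun v => (v.1 - n*v.2.1 - m*v.2.2, v.2.1, v.2.2), by intro v; ext <;> simp <;> ring,
          by intro v; ext <;> simp <;> ring⟩, by intro u v; ext <;> simp <;> ring⟩ :
            (ℤ×ℤ×ℤ) ≃+ (ℤ×ℤ×ℤ))).symm p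
        = E.symm (p.1 - n*p.2.1 - m*p.2.2, p.2.1, p.2.2) := by
      intro p; rfl
    rw [hsymm, hsymm]
    have h1 : E.symm ((0:ℤ) - n*1 - m*0, (1:ℤ), (0:ℤ)) = (-n) • (1:T) + ω := by
      rw [symm_decomp T E hE1]; simp; rfl
    have h2 : E.symm ((0:ℤ) - n*0 - m*1, (0:ℤ), (1:ℤ)) = (-m) • (1:T) + θ := by
      rw [symm_decomp T E hE1]; simp; rfl
    dsimp only
    simp only [h1, h2]
    have hprod : ((-n) • (1:T) + ω) * ((-m) • (1:T) + θ)
        = (n*m) • (1:T) + (-m) • ω + (-n) • θ + ω*θ := by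
      simp only [zsmul_eq_mul]; push_cast; ring
    have hEexp : E ((n*m) • (1:T) + (-m) • ω + (-n) • θ + ω*θ)
        = (n*m) • ((1:ℤ),(0:ℤ),(0:ℤ)) + (-m) • ((0:ℤ),(1:ℤ),(0:ℤ))
          + (-n) • ((0:ℤ),(0:ℤ),(1:ℤ)) + (l,m,n) := by
      rw [map_add, map_add, map_add, map_zsmul, map_zsmul, map_zsmul, hE1, hEωθ,
        show E ω = ((0:ℤ),(1:ℤ),(0:ℤ)) from E.apply_symm_apply _,
        show E θ = ((0:ℤ),(0:ℤ),(1:ℤ)) from E.apply_symm_apply _]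
    rw [hprod, AddEquiv.trans_apply, hEexp]
    simp
    try ring }
end Norm

section Exist
variable (T : Type) [CommRing T]

lemma prim (B : Module.Basis (Fin 3) ℤ T) (z : ℤ) (v : T) (hzv : z • v = 1) : z = 1 ∨ z = -1 := by
  haveI : Nontrivial T := ⟨⟨B 0, 0, B.ne_zero 0⟩⟩
  have hz0 : z ≠ 0 := by
    rintro rfl
    rw [zero_smul] at hzv
    exact one_ne_zero hzv.symm
  have hk : ∀ k : ℕ, (1:T) = z^k • v^k := by
    intro k
    rw [← smul_pow, hzv, one_pow]
  have h1r : B.repr 1 ≠ 0 := by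
    intro h
    apply one_ne_zero (α := T)
    apply B.repr.injective
    rw [h, map_zero]
  obtain ⟨i, hi⟩ := Finsupp.ne_iff.mp h1r
  rw [Finsupp.coe_zero, Pi.zero_apply] at hi
  have hdvd : ∀ k : ℕ, z^k ∣ B.repr 1 i := by
    intro k
    refine ⟨B.repr (v^k) i, ?_⟩
    conv_lhs => rw [hk k]
    rw [map_smul, Finsupp.smul_apply, smul_eq_mul]
  have hna : z.natAbs ≤ 1 := by
    by_contra h
    push_neg at h
    set k := (B.repr 1 i).natAbs with hkdef
    have hd := Int.natAbs_dvd_natAbs.mpr (hdvd k)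
    rw [Int.natAbs_pow] at hd
    have hle := Nat.le_of_dvd (Int.natAbs_pos.mpr hi) hd
    have h2k : k < 2^k := Nat.lt_two_pow_self
    have : (2:ℕ)^k ≤ z.natAbs^k := Nat.pow_le_pow_left h k
    omega
  rcases Int.natAbs_eq z with h | h <;> omega

lemma existsE (B : Module.Basis (Fin 3) ℤ T) : ∃ E : T ≃+ ℤ × ℤ × ℤ, E 1 = (1,0,0) := by
  haveI : Nontrivial T := ⟨⟨B 0, 0, B.ne_zero 0⟩⟩
  set N := Submodule.span ℤ {(1:T)} with hN
  have h1N : (1:T) ∈ N := Submodule.mem_span_singleton_self 1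
  obtain ⟨n, snf⟩ := Submodule.smithNormalForm B N
  haveI : Nontrivial N := ⟨⟨⟨1, h1N⟩, 0, by
    intro h
    exact one_ne_zero (α := T) (congrArg Subtype.val h)⟩⟩
  have hmem : ∀ x : N, ∃ m : ℤ, (x : T) = m • 1 := by
    intro x
    obtain ⟨m, hm⟩ := Submodule.mem_span_singleton.mp x.2
    exact ⟨m, hm.symm⟩
  have hn0 : n ≠ 0 := by
    rintro rfl
    obtain ⟨j⟩ := snf.bN.index_nonempty
    exact j.elim0
  have hn2 : n ≤ 1 := by
    by_contra h
    push_neg at h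
    have hi01 : (⟨0, by omega⟩ : Fin n) ≠ ⟨1, by omega⟩ := by
      intro hh
      simpa using congrArg Fin.val hh
    set i0 : Fin n := ⟨0, by omega⟩
    set i1 : Fin n := ⟨1, by omega⟩
    obtain ⟨m0, hm0⟩ := hmem (snf.bN i0)
    obtain ⟨m1, hm1⟩ := hmem (snf.bN i1)
    set g : Fin n → ℤ := fun j => if j = i0 then m1 else if j = i1 then -m0 else 0 with hg
    have hsum : ∑ j, g j • snf.bN j = 0 := by
      have hpt : ∀ j, g j • snf.bN j
          = (if j = i0 then m1 • snf.bN i0 else 0) + (if j = i1 then (-m0) • snf.bN i1 else 0) := by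
        intro j
        by_cases h0 : j = i0
        · subst h0
          simp [hg, hi01]
        · by_cases h1 : j = i1 <;> simp [hg, h0, h1, Ne.symm hi01]
      rw [Finset.sum_congr rfl (fun j _ => hpt j), Finset.sum_add_distrib,
        Finset.sum_ite_eq' Finset.univ i0, Finset.sum_ite_eq' Finset.univ i1]
      simp only [Finset.mem_univ, if_true]
      apply Subtype.coe_injective
      show (↑(m1 • snf.bN i0 + (-m0) • snf.bN i1) : T) = ((0 : N) : T)
      rw [Submodule.coe_add, Submodule.coe_smul, Submodule.coe_smul, hm0, hm1,
        smul_smul, smul_smul, ← add_smul,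
        show m1 * m0 + (-m0) * m1 = 0 by ring, zero_smul, ZeroMemClass.coe_zero]
    have hall := Fintype.linearIndependent_iff.mp snf.bN.linearIndependent g hsum
    have hm1z : m1 = 0 := by simpa [hg] using hall i0
    have : snf.bN i1 = 0 := by
      apply Subtype.coe_injective
      show (↑(snf.bN i1) : T) = ((0 : N) : T)
      rw [hm1, hm1z, zero_smul, ZeroMemClass.coe_zero]
    exact snf.bN.ne_zero i1 this
  have hn1 : n = 1 := by omega
  subst hn1
  have hrel := snf.snf 0
  have hsr := snf.bN.sum_repr ⟨1, h1N⟩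
  rw [Fin.sum_univ_one] at hsr
  set k := snf.bN.repr ⟨1, h1N⟩ 0 with hk
  have h1eq : (k * snf.a 0) • (snf.bM (snf.f 0)) = 1 := by
    have hcoe := congrArg Subtype.val hsr
    push_cast at hcoe
    rw [hrel, smul_smul] at hcoe
    exact hcoe
  obtain ⟨u, hu⟩ : ∃ u : ℤˣ, (u : ℤ) = k * snf.a 0 := by
    rcases prim T B (k * snf.a 0) (snf.bM (snf.f 0)) h1eq with h | h
    · exact ⟨1, h.symm⟩
    · exact ⟨-1, by rw [h]; rfl⟩
  set w : Fin 3 → ℤˣ := fun j => if j = snf.f 0 then u else 1 with hw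
  set B2 := (snf.bM.unitsSMul w).reindex (Equiv.swap (snf.f 0) 0) with hB2def
  have hB2 : B2 0 = 1 := by
    rw [hB2def, Module.Basis.reindex_apply, Equiv.symm_swap, Equiv.swap_apply_right,
      Module.Basis.unitsSMul_apply]
    simp only [hw, if_pos rfl]
    rw [Units.smul_def, hu, h1eq]
  refine ⟨B2.equivFun.toAddEquiv.trans
    ⟨⟨fun f => (f 0, f 1, f 2), fun p => ![p.1, p.2.1, p.2.2], ?_, ?_⟩, ?_⟩, ?_⟩
  · intro f
    funext j
    fin_cases j <;> rfl
  · intro p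
    rfl
  · intro f g
    rfl
  · rw [AddEquiv.trans_apply]
    have : B2.equivFun 1 = fun j => if 0 = j then 1 else 0 := by
      rw [← hB2]
      funext j
      rw [Module.Basis.equivFun_self]
    rw [LinearEquiv.coe_toAddEquiv]
    erw [this]
    rfl
end Exist

set_option maxHeartbeats 1600000 in
lemma backAux (a b c d a' b' c' d' p q r s ε : ℤ)
    (hdet2 : (p*s - q*r) * ε = 1)
    (hf : ∀ x y : ℤ, a'*x^3 + b'*x^2*y + c'*x*y^2 + d'*y^3
      = ε*(a*(x*p + y*r)^3 + b*(x*p + y*r)^2*(x*q + y*s)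
          + c*(x*p + y*r)*(x*q + y*s)^2 + d*(x*q + y*s)^3)) :
    ∃ e : (ℤ × ℤ × ℤ) ≃+ (ℤ × ℤ × ℤ), e (1, 0, 0) = (1, 0, 0) ∧
      ∀ x y : ℤ × ℤ × ℤ, e (cubicMul a b c d x y) = cubicMul a' b' c' d' (e x) (e y) := by
  have hu : IsUnit ε := IsUnit.of_mul_eq_one (p*s - q*r) (by rw [mul_comm]; exact hdet2)
  have he2 : ε * ε = 1 := by rcases Int.isUnit_iff.mp hu with h | h <;> rw [h] <;> norm_num
  have hps : p*s - q*r = ε := by linear_combination ε*hdet2 + (-(p*s-q*r))*he2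
  have ha : a' = ε*(a*p^3 + b*p^2*q + c*p*q^2 + d*q^3) := by linear_combination hf 1 0
  have hd : d' = ε*(a*r^3 + b*r^2*s + c*r*s^2 + d*s^3) := by linear_combination hf 0 1
  have hb : b' = ε*(3*a*p^2*r + b*(p^2*s + 2*p*q*r) + c*(q^2*r + 2*p*q*s) + 3*d*q^2*s) := by
    refine mul_left_cancel₀ (two_ne_zero) ?_
    linear_combination hf 1 1 - hf 1 (-1) - 2*hd
  have hc : c' = ε*(3*a*p*r^2 + b*(2*p*r*s + q*r^2) + c*(p*s^2 + 2*q*r*s) + 3*d*q*s^2) := by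
    refine mul_left_cancel₀ (two_ne_zero) ?_
    linear_combination hf 1 1 + hf 1 (-1) - 2*ha
  subst ha hb hc hd
  refine ⟨⟨⟨fun v => (v.1 + ((2)*d*q^2*s^2*ε^2 + c*q^2*r*s*ε^2 + c*p*q*s^2*ε^2 + (2)*b*p*q*r*s*ε^2 + a*p*q*r^2*ε^2 + a*p^2*r*s*ε^2)*v.2.1 + ((-1)*d*q^2*r*s*ε^2 + (-1)*d*p*q*s^2*ε^2 + (-2)*c*p*q*r*s*ε^2 + (-1)*b*p*q*r^2*ε^2 + (-1)*b*p^2*r*s*ε^2 + (-2)*a*p^2*r^2*ε^2)*v.2.2,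
      ε*s*v.2.1 + (-(ε*r))*v.2.2, (-(ε*q))*v.2.1 + ε*p*v.2.2),
    fun v => (v.1 + ((-1)*d*q^2*s*ε + (-1)*c*p*q*s*ε + (-1)*b*p*q*r*ε + (-1)*a*p^2*r*ε)*v.2.1 + (d*q*s^2*ε + c*q*r*s*ε + b*p*r*s*ε + a*p*r^2*ε)*v.2.2,
      p*v.2.1 + r*v.2.2, q*v.2.1 + s*v.2.2), ?_, ?_⟩, ?_⟩, ?_, ?_⟩
  · intro v
    refine Prod.ext ?_ (Prod.ext ?_ ?_)
    · dsimp only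
      linear_combination ((0:ℤ)) * he2 + ((0:ℤ)) * hps
    · dsimp only
      linear_combination (v.2.1) * he2 + (ε*v.2.1) * hps
    · dsimp only
      linear_combination (v.2.2) * he2 + (ε*v.2.2) * hps
  · intro v
    refine Prod.ext ?_ (Prod.ext ?_ ?_)
    · dsimp only
      linear_combination (d*q^2*r*s^2*v.2.2 + (-1)*d*q^3*r*s*v.2.1 + (-1)*d*p*q*s^3*v.2.2 + d*p*q^2*s^2*v.2.1 + c*q^2*r^2*s*v.2.2 + (-1)*c*p*q*r*s^2*v.2.2 + (-1)*c*p*q^2*r*s*v.2.1 + c*p^2*q*s^2*v.2.1 + b*p*q*r^2*s*v.2.2 + (-1)*b*p*q^2*r^2*v.2.1 + (-1)*b*p^2*r*s^2*v.2.2 + b*p^2*q*r*s*v.2.1 + a*p*q*r^3*v.2.2 + (-1)*a*p^2*r^2*s*v.2.2 + (-1)*a*p^2*q*r^2*v.2.1 + a*p^3*r*s*v.2.1) * he2 + ((-1)*d*q*s^2*v.2.2 + d*q^2*s*v.2.1 + (-1)*c*q*r*s*v.2.2 + c*p*q*s*v.2.1 + (-1)*b*p*r*s*v.2.2 + b*p*q*r*v.2.1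 + (-1)*a*p*r^2*v.2.2 + a*p^2*r*v.2.1) * hps
    · dsimp only
      linear_combination (v.2.1) * he2 + (ε*v.2.1) * hps
    · dsimp only
      linear_combination (v.2.2) * he2 + (ε*v.2.2) * hps
  · intro u v
    ext <;> dsimp only <;> simp only [Prod.fst_add, Prod.snd_add] <;> ring
  · refine Prod.ext ?_ (Prod.ext ?_ ?_) <;>
      simp only [AddEquiv.coe_mk, Equiv.coe_fn_mk] <;> norm_num
  · intro x y
    simp only [AddEquiv.coe_mk, Equiv.coe_fn_mk]
    refine Prod.ext ?_ (Prod.ext ?_ ?_)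
    · have hww0 : ((-2)*b*d*q^2*s^2*ε^2 + (-1)*b*c*q^2*r*s*ε^2 + (-1)*b*c*p*q*s^2*ε^2 + (-2)*b^2*p*q*r*s*ε^2 + (-1)*a*d*q^2*r*s*ε^2 + (-1)*a*d*p*q*s^2*ε^2 + (-1)*a*c + (-2)*a*c*p*q*r*s*ε^2 + (-2)*a*b*p*q*r^2*ε^2 + (-2)*a*b*p^2*r*s*ε^2 + (-2)*a^2*p^2*r^2*ε^2) = ((-2)*b*d*q^4*r^2*s^2*ε^4 + (4)*b*d*p*q^3*r*s^3*ε^4 + (-2)*b*d*p^2*q^2*s^4*ε^4 + (-1)*b*c*q^4*r^3*s*ε^4 + b*c*p*q^3*r^2*s^2*ε^4 + b*c*p^2*q^2*r*s^3*ε^4 + (-1)*b*c*p^3*q*s^4*ε^4 + (-2)*b^2*p*q^3*r^3*s*ε^4 + (4)*b^2*p^2*q^2*r^2*s^2*ε^4 + (-2)*b^2*p^3*q*r*s^3*ε^4 + (-1)*a*d*q^4*r^3*s*ε^4 + a*d*p*q^3*r^2*s^2*ε^4 + a*d*p^2*q^2*r*s^3*ε^4 + (-1)*a*d*p^3*q*s^4*ε^4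 + (-1)*a*c*q^4*r^4*ε^4 + (2)*a*c*p*q^3*r^3*s*ε^4 + (-2)*a*c*p^2*q^2*r^2*s^2*ε^4 + (2)*a*c*p^3*q*r*s^3*ε^4 + (-1)*a*c*p^4*s^4*ε^4 + (-2)*a*b*p*q^3*r^4*ε^4 + (2)*a*b*p^2*q^2*r^3*s*ε^4 + (2)*a*b*p^3*q*r^2*s^2*ε^4 + (-2)*a*b*p^4*r*s^3*ε^4 + (-2)*a^2*p^2*q^2*r^4*ε^4 + (4)*a^2*p^3*q*r^3*s*ε^4 + (-2)*a^2*p^4*r^2*s^2*ε^4) := by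
        linear_combination ((2)*b*d*q^4*r^2*s^2 + (2)*b*d*q^4*r^2*s^2*ε^2 + (-4)*b*d*p*q^3*r*s^3 + (-4)*b*d*p*q^3*r*s^3*ε^2 + (2)*b*d*p^2*q^2*s^4 + (2)*b*d*p^2*q^2*s^4*ε^2 + b*c*q^4*r^3*s + b*c*q^4*r^3*s*ε^2 + (-1)*b*c*p*q^3*r^2*s^2 + (-1)*b*c*p*q^3*r^2*s^2*ε^2 + (-1)*b*c*p^2*q^2*r*s^3 + (-1)*b*c*p^2*q^2*r*s^3*ε^2 + b*c*p^3*q*s^4 + b*c*p^3*q*s^4*ε^2 + (2)*b^2*p*q^3*r^3*s + (2)*b^2*p*q^3*r^3*s*ε^2 + (-4)*b^2*p^2*q^2*r^2*s^2 + (-4)*b^2*p^2*q^2*r^2*s^2*ε^2 + (2)*b^2*p^3*q*r*s^3 + (2)*b^2*p^3*q*r*s^3*ε^2 + a*d*q^4*r^3*s + a*d*q^4*r^3*s*ε^2 + (-1)*a*d*p*q^3*r^2*s^2 + (-1)*a*d*p*q^3*r^2*s^2*ε^2 + (-1)*a*d*p^2*q^2*r*s^3 + (-1)*a*d*p^2*q^2*r*s^3*ε^2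 + a*d*p^3*q*s^4 + a*d*p^3*q*s^4*ε^2 + a*c + a*c*q^2*r^2 + a*c*q^4*r^4 + a*c*q^4*r^4*ε^2 + (-2)*a*c*p*q*r*s + (-2)*a*c*p*q^3*r^3*s + (-2)*a*c*p*q^3*r^3*s*ε^2 + a*c*p^2*s^2 + (2)*a*c*p^2*q^2*r^2*s^2 + (2)*a*c*p^2*q^2*r^2*s^2*ε^2 + (-2)*a*c*p^3*q*r*s^3 + (-2)*a*c*p^3*q*r*s^3*ε^2 + a*c*p^4*s^4 + a*c*p^4*s^4*ε^2 + (2)*a*b*p*q^3*r^4 + (2)*a*b*p*q^3*r^4*ε^2 + (-2)*a*b*p^2*q^2*r^3*s + (-2)*a*b*p^2*q^2*r^3*s*ε^2 + (-2)*a*b*p^3*q*r^2*s^2 + (-2)*a*b*p^3*q*r^2*s^2*ε^2 + (2)*a*b*p^4*r*s^3 + (2)*a*b*p^4*r*s^3*ε^2 + (2)*a^2*p^2*q^2*r^4 + (2)*a^2*p^2*q^2*r^4*ε^2 + (-4)*a^2*p^3*q*r^3*s + (-4)*a^2*p^3*q*r^3*s*ε^2 + (2)*a^2*p^4*r^2*s^2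 + (2)*a^2*p^4*r^2*s^2*ε^2) * he2 + ((2)*b*d*q^2*s^2*ε + (-2)*b*d*q^3*r*s^2 + (2)*b*d*p*q^2*s^3 + b*c*q^2*r*s*ε + (-1)*b*c*q^3*r^2*s + b*c*p*q*s^2*ε + b*c*p^2*q*s^3 + (2)*b^2*p*q*r*s*ε + (-2)*b^2*p*q^2*r^2*s + (2)*b^2*p^2*q*r*s^2 + a*d*q^2*r*s*ε + (-1)*a*d*q^3*r^2*s + a*d*p*q*s^2*ε + a*d*p^2*q*s^3 + a*c*ε + (-1)*a*c*q*r + a*c*q^2*r^2*ε + (-1)*a*c*q^3*r^3 + a*c*p*s + a*c*p*q^2*r^2*s + a*c*p^2*s^2*ε + (-1)*a*c*p^2*q*r*s^2 + a*c*p^3*s^3 + (2)*a*b*p*q*r^2*ε + (-2)*a*b*p*q^2*r^3 + (2)*a*b*p^2*r*s*ε + (2)*a*b*p^3*r*s^2 + (2)*a^2*p^2*r^2*ε + (-2)*a^2*p^2*q*r^3 + (2)*a^2*p^3*r^2*s) * hps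
      have hwt0 : ((-1)*a*d) = ((-1)*a*d*q^4*r^4*ε^4 + (4)*a*d*p*q^3*r^3*s*ε^4 + (-6)*a*d*p^2*q^2*r^2*s^2*ε^4 + (4)*a*d*p^3*q*r*s^3*ε^4 + (-1)*a*d*p^4*s^4*ε^4) := by
        linear_combination (a*d + a*d*q^2*r^2 + a*d*q^4*r^4 + a*d*q^4*r^4*ε^2 + (-2)*a*d*p*q*r*s + (-4)*a*d*p*q^3*r^3*s + (-4)*a*d*p*q^3*r^3*s*ε^2 + a*d*p^2*s^2 + (6)*a*d*p^2*q^2*r^2*s^2 + (6)*a*d*p^2*q^2*r^2*s^2*ε^2 + (-4)*a*d*p^3*q*r*s^3 + (-4)*a*d*p^3*q*r*s^3*ε^2 + a*d*p^4*s^4 + a*d*p^4*s^4*ε^2) * he2 + (a*d*ε + (-1)*a*d*q*r + a*d*q^2*r^2*ε + (-1)*a*d*q^3*r^3 + a*d*p*s + (-2)*a*d*p*q*r*s*ε + (3)*a*d*p*q^2*r^2*s + a*d*p^2*s^2*ε + (-3)*a*d*p^2*q*r*s^2 + a*d*p^3*s^3) * hps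
      have htt0 : ((-2)*d^2*q^2*s^2*ε^2 + (-2)*c*d*q^2*r*s*ε^2 + (-2)*c*d*p*q*s^2*ε^2 + (-2)*c^2*p*q*r*s*ε^2 + (-1)*b*d + (-2)*b*d*p*q*r*s*ε^2 + (-1)*b*c*p*q*r^2*ε^2 + (-1)*b*c*p^2*r*s*ε^2 + (-1)*a*d*p*q*r^2*ε^2 + (-1)*a*d*p^2*r*s*ε^2 + (-2)*a*c*p^2*r^2*ε^2) = ((-2)*d^2*q^4*r^2*s^2*ε^4 + (4)*d^2*p*q^3*r*s^3*ε^4 + (-2)*d^2*p^2*q^2*s^4*ε^4 + (-2)*c*d*q^4*r^3*s*ε^4 + (2)*c*d*p*q^3*r^2*s^2*ε^4 + (2)*c*d*p^2*q^2*r*s^3*ε^4 + (-2)*c*d*p^3*q*s^4*ε^4 + (-2)*c^2*p*q^3*r^3*s*ε^4 + (4)*c^2*p^2*q^2*r^2*s^2*ε^4 + (-2)*c^2*p^3*q*r*s^3*ε^4 + (-1)*b*d*q^4*r^4*ε^4 + (2)*b*d*p*q^3*r^3*s*ε^4 + (-2)*b*d*p^2*q^2*r^2*s^2*ε^4 + (2)*b*d*p^3*q*r*s^3*ε^4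 + (-1)*b*d*p^4*s^4*ε^4 + (-1)*b*c*p*q^3*r^4*ε^4 + b*c*p^2*q^2*r^3*s*ε^4 + b*c*p^3*q*r^2*s^2*ε^4 + (-1)*b*c*p^4*r*s^3*ε^4 + (-1)*a*d*p*q^3*r^4*ε^4 + a*d*p^2*q^2*r^3*s*ε^4 + a*d*p^3*q*r^2*s^2*ε^4 + (-1)*a*d*p^4*r*s^3*ε^4 + (-2)*a*c*p^2*q^2*r^4*ε^4 + (4)*a*c*p^3*q*r^3*s*ε^4 + (-2)*a*c*p^4*r^2*s^2*ε^4) := by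
        linear_combination ((2)*d^2*q^4*r^2*s^2 + (2)*d^2*q^4*r^2*s^2*ε^2 + (-4)*d^2*p*q^3*r*s^3 + (-4)*d^2*p*q^3*r*s^3*ε^2 + (2)*d^2*p^2*q^2*s^4 + (2)*d^2*p^2*q^2*s^4*ε^2 + (2)*c*d*q^4*r^3*s + (2)*c*d*q^4*r^3*s*ε^2 + (-2)*c*d*p*q^3*r^2*s^2 + (-2)*c*d*p*q^3*r^2*s^2*ε^2 + (-2)*c*d*p^2*q^2*r*s^3 + (-2)*c*d*p^2*q^2*r*s^3*ε^2 + (2)*c*d*p^3*q*s^4 + (2)*c*d*p^3*q*s^4*ε^2 + (2)*c^2*p*q^3*r^3*s + (2)*c^2*p*q^3*r^3*s*ε^2 + (-4)*c^2*p^2*q^2*r^2*s^2 + (-4)*c^2*p^2*q^2*r^2*s^2*ε^2 + (2)*c^2*p^3*q*r*s^3 + (2)*c^2*p^3*q*r*s^3*ε^2 + b*d + b*d*q^2*r^2 + b*d*q^4*r^4 + b*d*q^4*r^4*ε^2 + (-2)*b*d*p*q*r*s + (-2)*b*d*p*q^3*r^3*s + (-2)*b*d*p*q^3*r^3*s*ε^2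 + b*d*p^2*s^2 + (2)*b*d*p^2*q^2*r^2*s^2 + (2)*b*d*p^2*q^2*r^2*s^2*ε^2 + (-2)*b*d*p^3*q*r*s^3 + (-2)*b*d*p^3*q*r*s^3*ε^2 + b*d*p^4*s^4 + b*d*p^4*s^4*ε^2 + b*c*p*q^3*r^4 + b*c*p*q^3*r^4*ε^2 + (-1)*b*c*p^2*q^2*r^3*s + (-1)*b*c*p^2*q^2*r^3*s*ε^2 + (-1)*b*c*p^3*q*r^2*s^2 + (-1)*b*c*p^3*q*r^2*s^2*ε^2 + b*c*p^4*r*s^3 + b*c*p^4*r*s^3*ε^2 + a*d*p*q^3*r^4 + a*d*p*q^3*r^4*ε^2 + (-1)*a*d*p^2*q^2*r^3*s + (-1)*a*d*p^2*q^2*r^3*s*ε^2 + (-1)*a*d*p^3*q*r^2*s^2 + (-1)*a*d*p^3*q*r^2*s^2*ε^2 + a*d*p^4*r*s^3 + a*d*p^4*r*s^3*ε^2 + (2)*a*c*p^2*q^2*r^4 + (2)*a*c*p^2*q^2*r^4*ε^2 + (-4)*a*c*p^3*q*r^3*s + (-4)*a*c*p^3*q*r^3*s*ε^2 + (2)*a*c*p^4*r^2*s^2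 + (2)*a*c*p^4*r^2*s^2*ε^2) * he2 + ((2)*d^2*q^2*s^2*ε + (-2)*d^2*q^3*r*s^2 + (2)*d^2*p*q^2*s^3 + (2)*c*d*q^2*r*s*ε + (-2)*c*d*q^3*r^2*s + (2)*c*d*p*q*s^2*ε + (2)*c*d*p^2*q*s^3 + (2)*c^2*p*q*r*s*ε + (-2)*c^2*p*q^2*r^2*s + (2)*c^2*p^2*q*r*s^2 + b*d*ε + (-1)*b*d*q*r + b*d*q^2*r^2*ε + (-1)*b*d*q^3*r^3 + b*d*p*s + b*d*p*q^2*r^2*s + b*d*p^2*s^2*ε + (-1)*b*d*p^2*q*r*s^2 + b*d*p^3*s^3 + b*c*p*q*r^2*ε + (-1)*b*c*p*q^2*r^3 + b*c*p^2*r*s*ε + b*c*p^3*r*s^2 + a*d*p*q*r^2*ε + (-1)*a*d*p*q^2*r^3 + a*d*p^2*r*s*ε + a*d*p^3*r*s^2 + (2)*a*c*p^2*r^2*ε + (-2)*a*c*p^2*q*r^3 + (2)*a*c*p^3*r^2*s) * hps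
      simp only [cubicMul]
      linear_combination (x.2.1*y.2.1) * hww0 + (x.2.1*y.2.2 + x.2.2*y.2.1) * hwt0 + (x.2.2*y.2.2) * htt0
    · have hww1 : ((-1)*b*s*ε + (-1)*a*r*ε) = ((-1)*b*q^2*r^2*s*ε^3 + (2)*b*p*q*r*s^2*ε^3 + (-1)*b*p^2*s^3*ε^3 + (-1)*a*q^2*r^3*ε^3 + (2)*a*p*q*r^2*s*ε^3 + (-1)*a*p^2*r*s^2*ε^3) := by
        linear_combination ((-1)*b*q*r*s + b*q^2*r^2*s*ε + b*p*s^2 + (-2)*b*p*q*r*s^2*ε + b*p^2*s^3*ε + (-1)*a*q*r^2 + a*q^2*r^3*ε + a*p*r*s + (-2)*a*p*q*r^2*s*ε + a*p^2*r*s^2*ε) * he2 + (b*s + (-1)*b*q*r*s*ε + b*p*s^2*ε + a*r + (-1)*a*q*r^2*ε + a*p*r*s*ε) * hps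
      have hwt1 : ((0:ℤ)) = ((0:ℤ)) := by
        linear_combination ((0:ℤ)) * he2 + ((0:ℤ)) * hps
      have htt1 : ((-1)*d*s*ε + (-1)*c*r*ε) = ((-1)*d*q^2*r^2*s*ε^3 + (2)*d*p*q*r*s^2*ε^3 + (-1)*d*p^2*s^3*ε^3 + (-1)*c*q^2*r^3*ε^3 + (2)*c*p*q*r^2*s*ε^3 + (-1)*c*p^2*r*s^2*ε^3) := by
        linear_combination ((-1)*d*q*r*s + d*q^2*r^2*s*ε + d*p*s^2 + (-2)*d*p*q*r*s^2*ε + d*p^2*s^3*ε + (-1)*c*q*r^2 + c*q^2*r^3*ε + c*p*r*s + (-2)*c*p*q*r^2*s*ε + c*p^2*r*s^2*ε) * he2 + (d*s + (-1)*d*q*r*s*ε + d*p*s^2*ε + c*r + (-1)*c*q*r^2*ε + c*p*r*s*ε) * hps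
      simp only [cubicMul]
      linear_combination (x.2.1*y.2.1) * hww1 + (x.2.1*y.2.2 + x.2.2*y.2.1) * hwt1 + (x.2.2*y.2.2) * htt1
    · have hww2 : (b*q*ε + a*p*ε) = (b*q^3*r^2*ε^3 + (-2)*b*p*q^2*r*s*ε^3 + b*p^2*q*s^2*ε^3 + a*p*q^2*r^2*ε^3 + (-2)*a*p^2*q*r*s*ε^3 + a*p^3*s^2*ε^3) := by
        linear_combination (b*q^2*r + (-1)*b*q^3*r^2*ε + (-1)*b*p*q*s + (2)*b*p*q^2*r*s*ε + (-1)*b*p^2*q*s^2*ε + a*p*q*r + (-1)*a*p*q^2*r^2*ε + (-1)*a*p^2*s + (2)*a*p^2*q*r*s*ε + (-1)*a*p^3*s^2*ε) * he2 + ((-1)*b*q + b*q^2*r*ε + (-1)*b*p*q*s*ε + (-1)*a*p + a*p*q*r*ε + (-1)*a*p^2*s*ε) * hps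
      have hwt2 : ((0:ℤ)) = ((0:ℤ)) := by
        linear_combination ((0:ℤ)) * he2 + ((0:ℤ)) * hps
      have htt2 : (d*q*ε + c*p*ε) = (d*q^3*r^2*ε^3 + (-2)*d*p*q^2*r*s*ε^3 + d*p^2*q*s^2*ε^3 + c*p*q^2*r^2*ε^3 + (-2)*c*p^2*q*r*s*ε^3 + c*p^3*s^2*ε^3) := by
        linear_combination (d*q^2*r + (-1)*d*q^3*r^2*ε + (-1)*d*p*q*s + (2)*d*p*q^2*r*s*ε + (-1)*d*p^2*q*s^2*ε + c*p*q*r + (-1)*c*p*q^2*r^2*ε + (-1)*c*p^2*s + (2)*c*p^2*q*r*s*ε + (-1)*c*p^3*s^2*ε) * he2 + ((-1)*d*q + d*q^2*r*ε + (-1)*d*p*q*s*ε + (-1)*c*p + c*p*q*r*ε + (-1)*c*p^2*s*ε) * hps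
      simp only [cubicMul]
      linear_combination (x.2.1*y.2.1) * hww2 + (x.2.1*y.2.2 + x.2.2*y.2.1) * hwt2 + (x.2.2*y.2.2) * htt2

set_option maxHeartbeats 1600000 in
lemma fwdAux (a b c d a' b' c' d' : ℤ) (e : (ℤ × ℤ × ℤ) ≃+ (ℤ × ℤ × ℤ))
    (h1 : e (1, 0, 0) = (1, 0, 0))
    (hmul : ∀ x y : ℤ × ℤ × ℤ, e (cubicMul a b c d x y) = cubicMul a' b' c' d' (e x) (e y)) :
    ∃ (g : Matrix (Fin 2) (Fin 2) ℤ) (ε : ℤ), g.det * ε = 1 ∧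
      ∀ x y : ℤ,
        a' * x ^ 3 + b' * x ^ 2 * y + c' * x * y ^ 2 + d' * y ^ 3
          = ε * (a * (x * g 0 0 + y * g 1 0) ^ 3
              + b * (x * g 0 0 + y * g 1 0) ^ 2 * (x * g 0 1 + y * g 1 1)
              + c * (x * g 0 0 + y * g 1 0) * (x * g 0 1 + y * g 1 1) ^ 2
              + d * (x * g 0 1 + y * g 1 1) ^ 3) := by
  have hdec : ∀ p : ℤ × ℤ × ℤ, e p
      = (p.1 + p.2.1 * (e (0,1,0)).1 + p.2.2 * (e (0,0,1)).1,
         p.2.1 * (e (0,1,0)).2.1 + p.2.2 * (e (0,0,1)).2.1,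
         p.2.1 * (e (0,1,0)).2.2 + p.2.2 * (e (0,0,1)).2.2) := by
    intro p
    have hp : p = p.1 • ((1,0,0) : ℤ × ℤ × ℤ) + p.2.1 • (0,1,0) + p.2.2 • (0,0,1) := by
      ext <;> simp
    conv_lhs => rw [hp, map_add, map_add, map_zsmul, map_zsmul, map_zsmul, h1]
    ext <;> simp [Prod.fst_add, Prod.snd_add] <;> ring
  set w1 := e (0,1,0) with hw1
  set w2 := e (0,0,1) with hw2
  have hww := hmul (0,1,0) (0,1,0)
  have hwt := hmul (0,1,0) (0,0,1)
  have htt := hmul (0,0,1) (0,0,1)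
  rw [show cubicMul a b c d (0,1,0) (0,1,0) = (-(a*c), -b, a) by simp [cubicMul], hdec] at hww
  rw [show cubicMul a b c d (0,1,0) (0,0,1) = (-(a*d), 0, 0) by simp [cubicMul], hdec] at hwt
  rw [show cubicMul a b c d (0,0,1) (0,0,1) = (-(b*d), -d, c) by simp [cubicMul], hdec] at htt
  rw [Prod.ext_iff, Prod.ext_iff] at hww hwt htt
  obtain ⟨hww0, hww1, hww2⟩ := hww
  obtain ⟨hwt0, hwt1, hwt2⟩ := hwt
  obtain ⟨htt0, htt1, htt2⟩ := htt
  simp only [cubicMul] at hww1 hww2 hwt1 hwt2 htt1 htt2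
  have hi1 := e.apply_symm_apply (0,1,0)
  have hi2 := e.apply_symm_apply (0,0,1)
  rw [hdec] at hi1 hi2
  rw [Prod.ext_iff, Prod.ext_iff] at hi1 hi2
  obtain ⟨hi10, hi11, hi12⟩ := hi1
  obtain ⟨hi20, hi21, hi22⟩ := hi2
  set v1 := e.symm (0,1,0)
  set v2 := e.symm (0,0,1)
  have hdet : (w1.2.1*w2.2.2 - w1.2.2*w2.2.1) * (v1.2.1*v2.2.2 - v1.2.2*v2.2.1) = 1 := by
    linear_combination (v2.2.1*w1.2.2 + v2.2.2*w2.2.2) * hi11 - (v2.2.1*w1.2.1 + v2.2.2*w2.2.1) * hi12 + hi22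
  have hu : IsUnit (w1.2.1*w2.2.2 - w1.2.2*w2.2.1) :=
    IsUnit.of_mul_eq_one _ hdet
  have he2 : (w1.2.1*w2.2.2 - w1.2.2*w2.2.1) * (w1.2.1*w2.2.2 - w1.2.2*w2.2.1) = 1 := by
    rcases Int.isUnit_iff.mp hu with h | h <;> rw [h] <;> norm_num
  refine ⟨!![(w1.2.1*w2.2.2 - w1.2.2*w2.2.1)*w2.2.2, -((w1.2.1*w2.2.2 - w1.2.2*w2.2.1)*w1.2.2);
      -((w1.2.1*w2.2.2 - w1.2.2*w2.2.1)*w2.2.1), (w1.2.1*w2.2.2 - w1.2.2*w2.2.1)*w1.2.1],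
    (w1.2.1*w2.2.2 - w1.2.2*w2.2.1), ?_, ?_⟩
  · rw [Matrix.det_fin_two_of]
    linear_combination ((w1.2.1*w2.2.2 - w1.2.2*w2.2.1)*(w1.2.1*w2.2.2 - w1.2.2*w2.2.1) + 1) * he2
  · intro x y
    simp only [Fin.isValue, Matrix.of_apply, Matrix.cons_val', Matrix.cons_val_zero,
      Matrix.empty_val', Matrix.cons_val_fin_one, Matrix.cons_val_one, Matrix.head_fin_const,
      Matrix.head_cons]
    have hA : a' = (-1)*d*w1.2.2^3 + c*w1.2.2^2*w2.2.2 + (-1)*b*w1.2.2*w2.2.2^2 + a*w2.2.2^3 := by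
      linear_combination ((-1)*w2.2.2^2) * hww2 + ((2)*w1.2.2*w2.2.2) * hwt2 + ((-1)*w1.2.2^2) * htt2 + (-a') * he2
    have hB : b' = (3)*d*w1.2.1*w1.2.2^2 + (-1)*c*w1.2.2^2*w2.2.1 + (-2)*c*w1.2.1*w1.2.2*w2.2.2 + (2)*b*w1.2.2*w2.2.1*w2.2.2 + b*w1.2.1*w2.2.2^2 + (-3)*a*w2.2.1*w2.2.2^2 := by
      linear_combination (w1.2.2^4*w2.2.1^4*w2.2.2^2 + (-4)*w1.2.1*w1.2.2^3*w2.2.1^3*w2.2.2^3 + (6)*w1.2.1^2*w1.2.2^2*w2.2.1^2*w2.2.2^4 + (-4)*w1.2.1^3*w1.2.2*w2.2.1*w2.2.2^5 + w1.2.1^4*w2.2.2^6) * hww1 + ((2)*w1.2.2^4*w2.2.1^5*w2.2.2 + (-8)*w1.2.1*w1.2.2^3*w2.2.1^4*w2.2.2^2 + (12)*w1.2.1^2*w1.2.2^2*w2.2.1^3*w2.2.2^3 + (-8)*w1.2.1^3*w1.2.2*w2.2.1^2*w2.2.2^4 + (2)*w1.2.1^4*w2.2.1*w2.2.2^5) *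 hww2 + ((-2)*w1.2.2^5*w2.2.1^4*w2.2.2 + (8)*w1.2.1*w1.2.2^4*w2.2.1^3*w2.2.2^2 + (-12)*w1.2.1^2*w1.2.2^3*w2.2.1^2*w2.2.2^3 + (8)*w1.2.1^3*w1.2.2^2*w2.2.1*w2.2.2^4 + (-2)*w1.2.1^4*w1.2.2*w2.2.2^5) * hwt1 + ((-2)*w1.2.2^5*w2.2.1^5 + (6)*w1.2.1*w1.2.2^4*w2.2.1^4*w2.2.2 + (-4)*w1.2.1^2*w1.2.2^3*w2.2.1^3*w2.2.2^2 + (-4)*w1.2.1^3*w1.2.2^2*w2.2.1^2*w2.2.2^3 + (6)*w1.2.1^4*w1.2.2*w2.2.1*w2.2.2^4 + (-2)*w1.2.1^5*w2.2.2^5) * hwt2 + (w1.2.2^6*w2.2.1^4 + (-4)*w1.2.1*w1.2.2^5*w2.2.1^3*w2.2.2 + (6)*w1.2.1^2*w1.2.2^4*w2.2.1^2*w2.2.2^2 + (-4)*w1.2.1^3*w1.2.2^3*w2.2.1*w2.2.2^3 + w1.2.1^4*w1.2.2^2*w2.2.2^4) * htt1 + ((2)*w1.2.1*w1.2.2^5*w2.2.1^4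 + (-8)*w1.2.1^2*w1.2.2^4*w2.2.1^3*w2.2.2 + (12)*w1.2.1^3*w1.2.2^3*w2.2.1^2*w2.2.2^2 + (-8)*w1.2.1^4*w1.2.2^2*w2.2.1*w2.2.2^3 + (2)*w1.2.1^5*w1.2.2*w2.2.2^4) * htt2 + ((-1)*b' + (-1)*b'*w1.2.2^2*w2.2.1^2 + (-1)*b'*w1.2.2^4*w2.2.1^4 + (2)*b'*w1.2.1*w1.2.2*w2.2.1*w2.2.2 + (4)*b'*w1.2.1*w1.2.2^3*w2.2.1^3*w2.2.2 + (-1)*b'*w1.2.1^2*w2.2.2^2 + (-6)*b'*w1.2.1^2*w1.2.2^2*w2.2.1^2*w2.2.2^2 + (4)*b'*w1.2.1^3*w1.2.2*w2.2.1*w2.2.2^3 + (-1)*b'*w1.2.1^4*w2.2.2^4 + (3)*d*w1.2.1*w1.2.2^2 + (3)*d*w1.2.1*w1.2.2^4*w2.2.1^2 + (-6)*d*w1.2.1^2*w1.2.2^3*w2.2.1*w2.2.2 + (3)*d*w1.2.1^3*w1.2.2^2*w2.2.2^2 + (-1)*c*w1.2.2^2*w2.2.1 + (-1)*c*w1.2.2^4*w2.2.1^3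 + (-2)*c*w1.2.1*w1.2.2*w2.2.2 + (3)*c*w1.2.1^2*w1.2.2^2*w2.2.1*w2.2.2^2 + (-2)*c*w1.2.1^3*w1.2.2*w2.2.2^3 + (2)*b*w1.2.2*w2.2.1*w2.2.2 + (2)*b*w1.2.2^3*w2.2.1^3*w2.2.2 + b*w1.2.1*w2.2.2^2 + (-3)*b*w1.2.1*w1.2.2^2*w2.2.1^2*w2.2.2^2 + b*w1.2.1^3*w2.2.2^4 + (-3)*a*w2.2.1*w2.2.2^2 + (-3)*a*w1.2.2^2*w2.2.1^3*w2.2.2^2 + (6)*a*w1.2.1*w1.2.2*w2.2.1^2*w2.2.2^3 + (-3)*a*w1.2.1^2*w2.2.1*w2.2.2^4) * he2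
    have hC : c' = (-3)*d*w1.2.1^2*w1.2.2 + (2)*c*w1.2.1*w1.2.2*w2.2.1 + c*w1.2.1^2*w2.2.2 + (-1)*b*w1.2.2*w2.2.1^2 + (-2)*b*w1.2.1*w2.2.1*w2.2.2 + (3)*a*w2.2.1^2*w2.2.2 := by
      linear_combination ((-2)*w1.2.2^4*w2.2.1^5*w2.2.2 + (8)*w1.2.1*w1.2.2^3*w2.2.1^4*w2.2.2^2 + (-12)*w1.2.1^2*w1.2.2^2*w2.2.1^3*w2.2.2^3 + (8)*w1.2.1^3*w1.2.2*w2.2.1^2*w2.2.2^4 + (-2)*w1.2.1^4*w2.2.1*w2.2.2^5) * hww1 + ((-1)*w1.2.2^4*w2.2.1^6 + (4)*w1.2.1*w1.2.2^3*w2.2.1^5*w2.2.2 + (-6)*w1.2.1^2*w1.2.2^2*w2.2.1^4*w2.2.2^2 + (4)*w1.2.1^3*w1.2.2*w2.2.1^3*w2.2.2^3 + (-1)*w1.2.1^4*w2.2.1^2*w2.2.2^4) * hww2 + ((2)*w1.2.2^5*w2.2.1^5 + (-6)*w1.2.1*w1.2.2^4*w2.2.1^4*w2.2.2 + (4)*w1.2.1^2*w1.2.2^3*w2.2.1^3*w2.2.2^2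 + (4)*w1.2.1^3*w1.2.2^2*w2.2.1^2*w2.2.2^3 + (-6)*w1.2.1^4*w1.2.2*w2.2.1*w2.2.2^4 + (2)*w1.2.1^5*w2.2.2^5) * hwt1 + ((2)*w1.2.1*w1.2.2^4*w2.2.1^5 + (-8)*w1.2.1^2*w1.2.2^3*w2.2.1^4*w2.2.2 + (12)*w1.2.1^3*w1.2.2^2*w2.2.1^3*w2.2.2^2 + (-8)*w1.2.1^4*w1.2.2*w2.2.1^2*w2.2.2^3 + (2)*w1.2.1^5*w2.2.1*w2.2.2^4) * hwt2 + ((-2)*w1.2.1*w1.2.2^5*w2.2.1^4 + (8)*w1.2.1^2*w1.2.2^4*w2.2.1^3*w2.2.2 + (-12)*w1.2.1^3*w1.2.2^3*w2.2.1^2*w2.2.2^2 + (8)*w1.2.1^4*w1.2.2^2*w2.2.1*w2.2.2^3 + (-2)*w1.2.1^5*w1.2.2*w2.2.2^4) * htt1 + ((-1)*w1.2.1^2*w1.2.2^4*w2.2.1^4 + (4)*w1.2.1^3*w1.2.2^3*w2.2.1^3*w2.2.2 + (-6)*w1.2.1^4*w1.2.2^2*w2.2.1^2*w2.2.2^2 +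 (4)*w1.2.1^5*w1.2.2*w2.2.1*w2.2.2^3 + (-1)*w1.2.1^6*w2.2.2^4) * htt2 + ((-1)*c' + (-1)*c'*w1.2.2^2*w2.2.1^2 + (-1)*c'*w1.2.2^4*w2.2.1^4 + (2)*c'*w1.2.1*w1.2.2*w2.2.1*w2.2.2 + (4)*c'*w1.2.1*w1.2.2^3*w2.2.1^3*w2.2.2 + (-1)*c'*w1.2.1^2*w2.2.2^2 + (-6)*c'*w1.2.1^2*w1.2.2^2*w2.2.1^2*w2.2.2^2 + (4)*c'*w1.2.1^3*w1.2.2*w2.2.1*w2.2.2^3 + (-1)*c'*w1.2.1^4*w2.2.2^4 + (-3)*d*w1.2.1^2*w1.2.2 + (-3)*d*w1.2.1^2*w1.2.2^3*w2.2.1^2 + (6)*d*w1.2.1^3*w1.2.2^2*w2.2.1*w2.2.2 + (-3)*d*w1.2.1^4*w1.2.2*w2.2.2^2 + (2)*c*w1.2.1*w1.2.2*w2.2.1 + (2)*c*w1.2.1*w1.2.2^3*w2.2.1^3 + c*w1.2.1^2*w2.2.2 + (-3)*c*w1.2.1^2*w1.2.2^2*w2.2.1^2*w2.2.2 + c*w1.2.1^4*w2.2.2^3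 + (-1)*b*w1.2.2*w2.2.1^2 + (-1)*b*w1.2.2^3*w2.2.1^4 + (-2)*b*w1.2.1*w2.2.1*w2.2.2 + (3)*b*w1.2.1^2*w1.2.2*w2.2.1^2*w2.2.2^2 + (-2)*b*w1.2.1^3*w2.2.1*w2.2.2^3 + (3)*a*w2.2.1^2*w2.2.2 + (3)*a*w1.2.2^2*w2.2.1^4*w2.2.2 + (-6)*a*w1.2.1*w1.2.2*w2.2.1^3*w2.2.2^2 + (3)*a*w1.2.1^2*w2.2.1^2*w2.2.2^3) * he2
    have hD : d' = d*w1.2.1^3 + (-1)*c*w1.2.1^2*w2.2.1 + b*w1.2.1*w2.2.1^2 + (-1)*a*w2.2.1^3 := by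
      linear_combination (w2.2.1^2) * hww1 + ((-2)*w1.2.1*w2.2.1) * hwt1 + (w1.2.1^2) * htt1 + (-d') * he2
    linear_combination x^3 * hA + x^2*y * hB + x*y^2 * hC + y^3 * hD + (d*w1.2.2^3*x^3 + d*w1.2.2^5*w2.2.1^2*x^3 + (-3)*d*w1.2.1*w1.2.2^2*x^2*y + (-2)*d*w1.2.1*w1.2.2^4*w2.2.1*w2.2.2*x^3 + (-3)*d*w1.2.1*w1.2.2^4*w2.2.1^2*x^2*y + (3)*d*w1.2.1^2*w1.2.2*x*y^2 + d*w1.2.1^2*w1.2.2^3*w2.2.2^2*x^3 + (6)*d*w1.2.1^2*w1.2.2^3*w2.2.1*w2.2.2*x^2*y + (3)*d*w1.2.1^2*w1.2.2^3*w2.2.1^2*x*y^2 + (-1)*d*w1.2.1^3*y^3 + (-3)*d*w1.2.1^3*w1.2.2^2*w2.2.2^2*x^2*y + (-6)*d*w1.2.1^3*w1.2.2^2*w2.2.1*w2.2.2*x*y^2 + (-1)*d*w1.2.1^3*w1.2.2^2*w2.2.1^2*y^3 + (3)*d*w1.2.1^4*w1.2.2*w2.2.2^2*x*y^2 + (2)*d*w1.2.1^4*w1.2.2*w2.2.1*w2.2.2*y^3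 + (-1)*d*w1.2.1^5*w2.2.2^2*y^3 + (-1)*c*w1.2.2^2*w2.2.2*x^3 + c*w1.2.2^2*w2.2.1*x^2*y + (-1)*c*w1.2.2^4*w2.2.1^2*w2.2.2*x^3 + c*w1.2.2^4*w2.2.1^3*x^2*y + (2)*c*w1.2.1*w1.2.2*w2.2.2*x^2*y + (-2)*c*w1.2.1*w1.2.2*w2.2.1*x*y^2 + (2)*c*w1.2.1*w1.2.2^3*w2.2.1*w2.2.2^2*x^3 + (-2)*c*w1.2.1*w1.2.2^3*w2.2.1^3*x*y^2 + (-1)*c*w1.2.1^2*w2.2.2*x*y^2 + c*w1.2.1^2*w2.2.1*y^3 + (-1)*c*w1.2.1^2*w1.2.2^2*w2.2.2^3*x^3 + (-3)*c*w1.2.1^2*w1.2.2^2*w2.2.1*w2.2.2^2*x^2*y + (3)*c*w1.2.1^2*w1.2.2^2*w2.2.1^2*w2.2.2*x*y^2 + c*w1.2.1^2*w1.2.2^2*w2.2.1^3*y^3 + (2)*c*w1.2.1^3*w1.2.2*w2.2.2^3*x^2*y + (-2)*c*w1.2.1^3*w1.2.2*w2.2.1^2*w2.2.2*y^3 + (-1)*c*w1.2.1^4*w2.2.2^3*x*y^2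 + c*w1.2.1^4*w2.2.1*w2.2.2^2*y^3 + b*w1.2.2*w2.2.2^2*x^3 + (-2)*b*w1.2.2*w2.2.1*w2.2.2*x^2*y + b*w1.2.2*w2.2.1^2*x*y^2 + b*w1.2.2^3*w2.2.1^2*w2.2.2^2*x^3 + (-2)*b*w1.2.2^3*w2.2.1^3*w2.2.2*x^2*y + b*w1.2.2^3*w2.2.1^4*x*y^2 + (-1)*b*w1.2.1*w2.2.2^2*x^2*y + (2)*b*w1.2.1*w2.2.1*w2.2.2*x*y^2 + (-1)*b*w1.2.1*w2.2.1^2*y^3 + (-2)*b*w1.2.1*w1.2.2^2*w2.2.1*w2.2.2^3*x^3 + (3)*b*w1.2.1*w1.2.2^2*w2.2.1^2*w2.2.2^2*x^2*y + (-1)*b*w1.2.1*w1.2.2^2*w2.2.1^4*y^3 + b*w1.2.1^2*w1.2.2*w2.2.2^4*x^3 + (-3)*b*w1.2.1^2*w1.2.2*w2.2.1^2*w2.2.2^2*x*y^2 + (2)*b*w1.2.1^2*w1.2.2*w2.2.1^3*w2.2.2*y^3 + (-1)*b*w1.2.1^3*w2.2.2^4*x^2*y + (2)*b*w1.2.1^3*w2.2.1*w2.2.2^3*x*y^2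 + (-1)*b*w1.2.1^3*w2.2.1^2*w2.2.2^2*y^3 + (-1)*a*w2.2.2^3*x^3 + (3)*a*w2.2.1*w2.2.2^2*x^2*y + (-3)*a*w2.2.1^2*w2.2.2*x*y^2 + a*w2.2.1^3*y^3 + (-1)*a*w1.2.2^2*w2.2.1^2*w2.2.2^3*x^3 + (3)*a*w1.2.2^2*w2.2.1^3*w2.2.2^2*x^2*y + (-3)*a*w1.2.2^2*w2.2.1^4*w2.2.2*x*y^2 + a*w1.2.2^2*w2.2.1^5*y^3 + (2)*a*w1.2.1*w1.2.2*w2.2.1*w2.2.2^4*x^3 + (-6)*a*w1.2.1*w1.2.2*w2.2.1^2*w2.2.2^3*x^2*y + (6)*a*w1.2.1*w1.2.2*w2.2.1^3*w2.2.2^2*x*y^2 + (-2)*a*w1.2.1*w1.2.2*w2.2.1^4*w2.2.2*y^3 + (-1)*a*w1.2.1^2*w2.2.2^5*x^3 + (3)*a*w1.2.1^2*w2.2.1*w2.2.2^4*x^2*y + (-3)*a*w1.2.1^2*w2.2.1^2*w2.2.2^3*x*y^2 + a*w1.2.1^2*w2.2.1^3*w2.2.2^2*y^3) * he2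

/-- (i) Every cubic ring over `ℤ` is isomorphic as a ring to `T_f` for some integral
binary cubic form `f`; (ii) `T_f ≅ T_{f'}` if and only if `f' = f·g` for some
`g ∈ GL₂(ℤ)`, i.e. `f'(x, y) = det(g)⁻¹·f((x, y)g)`. -/
theorem cubic_rings_parametrized_by_binary_cubic_forms :
    (∀ (T : Type) [CommRing T], Nonempty (Module.Basis (Fin 3) ℤ T) →
      ∃ (a b c d : ℤ) (e : T ≃+ (ℤ × ℤ × ℤ)),
        e 1 = (1, 0, 0) ∧ ∀ x y : T, e (x * y) = cubicMul a b c d (e x) (e y)) ∧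
    (∀ a b c d a' b' c' d' : ℤ,
      (∃ e : (ℤ × ℤ × ℤ) ≃+ (ℤ × ℤ × ℤ), e (1, 0, 0) = (1, 0, 0) ∧
          ∀ x y : ℤ × ℤ × ℤ,
            e (cubicMul a b c d x y) = cubicMul a' b' c' d' (e x) (e y)) ↔
      (∃ (g : Matrix (Fin 2) (Fin 2) ℤ) (ε : ℤ), g.det * ε = 1 ∧
          ∀ x y : ℤ,
            a' * x ^ 3 + b' * x ^ 2 * y + c' * x * y ^ 2 + d' * y ^ 3
              = ε * (a * (x * g 0 0 + y * g 1 0) ^ 3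
                  + b * (x * g 0 0 + y * g 1 0) ^ 2 * (x * g 0 1 + y * g 1 1)
                  + c * (x * g 0 0 + y * g 1 0) * (x * g 0 1 + y * g 1 1) ^ 2
                  + d * (x * g 0 1 + y * g 1 1) ^ 3))) := by
  constructor
  · intro T _ hB
    obtain ⟨B⟩ := hB
    obtain ⟨E, hE1⟩ := existsE T B
    obtain ⟨E', h1', hn1, hn2⟩ := normalizeE T E hE1
    obtain ⟨a, b, c, d, hmul⟩ := core T E' h1' hn1 hn2
    exact ⟨a, b, c, d, E', h1', hmul⟩
  · intro a b c d a' b' c' d'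
    constructor
    · rintro ⟨e, h1, hmul⟩
      exact fwdAux a b c d a' b' c' d' e h1 hmul
    · rintro ⟨g, ε, hdet, hf⟩
      refine backAux a b c d a' b' c' d' (g 0 0) (g 0 1) (g 1 0) (g 1 1) ε ?_ ?_
      · rw [Matrix.det_fin_two] at hdet
        linear_combination hdet
      · intro x y
        linear_combination hf x y
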